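/- arXiv:1903.11460 — 2 statements merged into one kernel-verified Lean document; each statement's English description precedes it below -/
import Mathlib

section
/- Let X ∈ ℝ^{m×n}, β⁰ ∈ ℝⁿ, ε ∈ ℝ^m with ε ≠ 0, b = Xβ⁰ + ε, p a norm on ℝⁿ, λ > 0, σ ≥ 0, τ ≥ 0, and let β̂ minimize F(β) = ‖Xβ − b‖ + λ p(β) + (σ/2)‖β‖² + (τ/2)‖Xβ − b‖² over ℝⁿ. Set ε̂ = b − Xβ̂. Define n_p = λ p(β⁰)/‖ε‖, λ₀ = p_*(Xᵀε)/‖ε‖, t₁ = 1 + (τ/2)‖ε‖ + σ p_*(β⁰) p(β⁰)/(2‖ε‖), c_u = t₁ + n_p, and a = ( λ₀ + σ p_*(β⁰) c_u ) t₁/λ. Assume ‖ε̂‖ ≠ 0 and a + 2λ₀ n_p/λ < 1. Then c_l ≤ ‖ε̂‖/‖ε‖ ≤ c_u, where c_l = (1 − a − 2λ₀ n_p/λ) / ( 2 + (1 + σ p_*(β⁰)/λ) n_p ). -/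
open scoped RealInnerProductSpace

noncomputable section

/-- A function `p` is a norm on a real vector space. -/
def IsNorm {E : Type*} [AddCommGroup E] [Module ℝ E] (p : E → ℝ) : Prop :=
  (∀ x y, p (x + y) ≤ p x + p y) ∧ (∀ (c : ℝ) (x : E), p (c • x) = |c| * p x) ∧
    (∀ x, p x = 0 ↔ x = 0)

/-- The dual norm `q_*(z) = sup {⟨z, β⟩ : q β ≤ 1}`. -/
def dualNorm {ι : Type*} [Fintype ι] (q : EuclideanSpace ℝ ι → ℝ)
    (z : EuclideanSpace ℝ ι) : ℝ :=
  sSup {r : ℝ | ∃ β : EuclideanSpace ℝ ι, q β ≤ 1 ∧ r = ⟪z, β⟫}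

/-- `β_S`: the vector agreeing with `β` on `S` and zero on the complement. -/
def projS {n : ℕ} (S : Finset (Fin n)) (β : EuclideanSpace ℝ (Fin n)) :
    EuclideanSpace ℝ (Fin n) :=
  WithLp.toLp 2 (fun i => if i ∈ S then β i else 0)

/-- `β_{S̄}`: the vector agreeing with `β` on the complement of `S` and zero on `S`. -/
def projSc {n : ℕ} (S : Finset (Fin n)) (β : EuclideanSpace ℝ (Fin n)) :
    EuclideanSpace ℝ (Fin n) :=
  WithLp.toLp 2 (fun i => if i ∈ S then 0 else β i)

/-- `β^{S̄}`: the restriction of `β` to the complement of `S`. -/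
def restrC {n : ℕ} (S : Finset (Fin n)) (β : EuclideanSpace ℝ (Fin n)) :
    EuclideanSpace ℝ {i : Fin n // i ∉ S} :=
  WithLp.toLp 2 (fun j => β j.1)

/-- Matrix-vector multiplication as a map between Euclidean spaces. -/
def mulVecE {m n : ℕ} (X : Matrix (Fin m) (Fin n) ℝ) (β : EuclideanSpace ℝ (Fin n)) :
    EuclideanSpace ℝ (Fin m) :=
  WithLp.toLp 2 (X.mulVec β)

lemma IsNorm.nonneg' {E : Type*} [AddCommGroup E] [Module ℝ E] {p : E → ℝ}
    (hp : IsNorm p) (x : E) : 0 ≤ p x := by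
  have h0 : p 0 = 0 := (hp.2.2 0).mpr rfl
  have hneg : p (-x) = p x := by
    have := hp.2.1 (-1) x
    simpa using this
  have h := hp.1 x (-x)
  rw [add_neg_cancel, h0, hneg] at h
  linarith

def NormSyn (n : ℕ) : Type := EuclideanSpace ℝ (Fin n)

lemma IsNorm.norm_le {n : ℕ} {p : EuclideanSpace ℝ (Fin n) → ℝ} (hp : IsNorm p) :
    ∃ C : ℝ, 0 ≤ C ∧ ∀ x, ‖x‖ ≤ C * p x := by
  letI instA : AddCommGroup (NormSyn n) := inferInstanceAs (AddCommGroup (EuclideanSpace ℝ (Fin n)))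
  letI instM : Module ℝ (NormSyn n) := inferInstanceAs (Module ℝ (EuclideanSpace ℝ (Fin n)))
  let N : AddGroupNorm (NormSyn n) :=
    { toFun := fun x => p x
      map_zero' := (hp.2.2 0).mpr rfl
      add_le' := hp.1
      neg' := fun x => by
        have key : ∀ y : EuclideanSpace ℝ (Fin n), p (-y) = p y := fun y => by
          have h := hp.2.1 (-1) y
          rw [abs_neg, abs_one, one_mul, neg_one_smul] at h
          exact h
        exact key x
      eq_zero_of_map_eq_zero' := fun x hx => (hp.2.2 x).mp hx }
  letI : NormedAddCommGroup (NormSyn n) := N.toNormedAddCommGroup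
  letI : NormedSpace ℝ (NormSyn n) :=
    { norm_smul_le := fun c x => le_of_eq (by rw [Real.norm_eq_abs]; exact hp.2.1 c x) }
  letI : FiniteDimensional ℝ (NormSyn n) :=
    inferInstanceAs (FiniteDimensional ℝ (EuclideanSpace ℝ (Fin n)))
  let f : NormSyn n →ₗ[ℝ] EuclideanSpace ℝ (Fin n) :=
    { toFun := fun x => x, map_add' := fun _ _ => rfl, map_smul' := fun _ _ => rfl }
  let g := LinearMap.toContinuousLinearMap f
  refine ⟨‖g‖, norm_nonneg _, fun x => ?_⟩
  have := g.le_opNorm x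
  exact this

lemma dualNorm_bddAbove {n : ℕ} {p : EuclideanSpace ℝ (Fin n) → ℝ} (hp : IsNorm p)
    (z : EuclideanSpace ℝ (Fin n)) :
    BddAbove {r : ℝ | ∃ β : EuclideanSpace ℝ (Fin n), p β ≤ 1 ∧ r = ⟪z, β⟫} := by
  obtain ⟨C, hC0, hC⟩ := hp.norm_le
  refine ⟨‖z‖ * C, ?_⟩
  rintro r ⟨β, hβ, rfl⟩
  calc ⟪z, β⟫ ≤ ‖z‖ * ‖β‖ := real_inner_le_norm z β
    _ ≤ ‖z‖ * (C * p β) := by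
        exact mul_le_mul_of_nonneg_left (hC β) (norm_nonneg z)
    _ ≤ ‖z‖ * (C * 1) := by
        have : C * p β ≤ C * 1 := mul_le_mul_of_nonneg_left hβ hC0
        exact mul_le_mul_of_nonneg_left this (norm_nonneg z)
    _ = ‖z‖ * C := by ring

lemma dualNorm_nonneg' {n : ℕ} {p : EuclideanSpace ℝ (Fin n) → ℝ} (hp : IsNorm p)
    (z : EuclideanSpace ℝ (Fin n)) : 0 ≤ dualNorm p z := by
  apply le_csSup (dualNorm_bddAbove hp z)
  exact ⟨0, by simp [(hp.2.2 0).mpr rfl]⟩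

lemma inner_le_dualNorm {n : ℕ} {p : EuclideanSpace ℝ (Fin n) → ℝ} (hp : IsNorm p)
    (z v : EuclideanSpace ℝ (Fin n)) : ⟪z, v⟫ ≤ dualNorm p z * p v := by
  rcases eq_or_lt_of_le (hp.nonneg' v) with h | h
  · have hv : v = 0 := (hp.2.2 v).mp h.symm
    subst hv
    simp only [inner_zero_right]
    rw [← h, mul_zero]
  · have hmem : (⟪z, (p v)⁻¹ • v⟫ : ℝ) ∈
        {r : ℝ | ∃ β : EuclideanSpace ℝ (Fin n), p β ≤ 1 ∧ r = ⟪z, β⟫} := by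
      refine ⟨(p v)⁻¹ • v, le_of_eq ?_, rfl⟩
      rw [hp.2.1, abs_of_nonneg (inv_nonneg.mpr h.le), inv_mul_cancel₀ (ne_of_gt h)]
    have hle := le_csSup (dualNorm_bddAbove hp z) hmem
    rw [real_inner_smul_right] at hle
    have := mul_le_mul_of_nonneg_right hle h.le
    rwa [inv_mul_eq_div, div_mul_cancel₀ _ (ne_of_gt h)] at this


lemma inner_mulVecE {m n : ℕ} (X : Matrix (Fin m) (Fin n) ℝ) (ε : EuclideanSpace ℝ (Fin m))
    (w : EuclideanSpace ℝ (Fin n)) : ⟪ε, mulVecE X w⟫ = ⟪mulVecE X.transpose ε, w⟫ := by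
  simp only [mulVecE, PiLp.inner_apply, PiLp.toLp_apply, RCLike.inner_apply, conj_trivial]
  have : ∀ i, (X.mulVec w) i = ∑ j, X i j * w j := fun i => rfl
  simp only [Matrix.mulVec, dotProduct, Matrix.transpose_apply,
    Finset.mul_sum, Finset.sum_mul]
  rw [Finset.sum_comm]
  apply Finset.sum_congr rfl
  intro i _
  apply Finset.sum_congr rfl
  intro j _
  ring

set_option maxHeartbeats 1000000 in
/-- `c_l ≤ ‖ε̂‖/‖ε‖ ≤ c_u`. -/
theorem residual_ratio_bounds {m n : ℕ} (X : Matrix (Fin m) (Fin n) ℝ)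
    (β0 : EuclideanSpace ℝ (Fin n)) (ε : EuclideanSpace ℝ (Fin m)) (hε : ε ≠ 0)
    (b : EuclideanSpace ℝ (Fin m)) (hb : b = mulVecE X β0 + ε)
    (p : EuclideanSpace ℝ (Fin n) → ℝ) (hp : IsNorm p)
    (lam σ τ : ℝ) (hlam : 0 < lam) (hσ : 0 ≤ σ) (hτ : 0 ≤ τ)
    (βh : EuclideanSpace ℝ (Fin n))
    (hmin : ∀ β : EuclideanSpace ℝ (Fin n),
      ‖mulVecE X βh - b‖ + lam * p βh + σ / 2 * ‖βh‖ ^ 2 +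
          τ / 2 * ‖mulVecE X βh - b‖ ^ 2 ≤
        ‖mulVecE X β - b‖ + lam * p β + σ / 2 * ‖β‖ ^ 2 +
          τ / 2 * ‖mulVecE X β - b‖ ^ 2)
    (εh : EuclideanSpace ℝ (Fin m)) (hεh : εh = b - mulVecE X βh)
    (np lam0 t1 cu a cl : ℝ)
    (hnp : np = lam * p β0 / ‖ε‖)
    (hlam0 : lam0 = dualNorm p (mulVecE X.transpose ε) / ‖ε‖)
    (ht1 : t1 = 1 + τ / 2 * ‖ε‖ + σ * dualNorm p β0 * p β0 / (2 * ‖ε‖))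
    (hcu : cu = t1 + np)
    (ha : a = (lam0 + σ * dualNorm p β0 * cu) * t1 / lam)
    (hcl : cl = (1 - a - 2 * lam0 * np / lam) / (2 + (1 + σ * dualNorm p β0 / lam) * np))
    (hεhne : ‖εh‖ ≠ 0) (hsmall : a + 2 * lam0 * np / lam < 1) :
    cl ≤ ‖εh‖ / ‖ε‖ ∧ ‖εh‖ / ‖ε‖ ≤ cu := by
  have he : (0:ℝ) < ‖ε‖ := norm_pos_iff.mpr hε
  set e := ‖ε‖ with hedef
  set r := ‖εh‖ with hrdef
  set P := p βh with hPdef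
  set P0 := p β0 with hP0def
  set D := dualNorm p (mulVecE X.transpose ε) with hDdef
  set Q := dualNorm p β0 with hQdef
  have hr : 0 ≤ r := norm_nonneg _
  have hP0n : 0 ≤ P0 := hp.nonneg' β0
  have hPn : 0 ≤ P := hp.nonneg' βh
  have hDn : 0 ≤ D := dualNorm_nonneg' hp _
  have hQn : 0 ≤ Q := dualNorm_nonneg' hp _
  -- key1
  have h1 : mulVecE X β0 - b = -ε := by rw [hb]; abel
  have h2 : mulVecE X βh - b = -εh := by rw [hεh]; abel
  have hmin0 := hmin β0
  rw [h1, h2, norm_neg, norm_neg] at hmin0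
  have hQle : ‖β0‖ ^ 2 ≤ Q * P0 := by
    have := inner_le_dualNorm hp β0 β0
    rwa [real_inner_self_eq_norm_sq] at this
  have key1 : r + lam * P ≤ e + lam * P0 + σ / 2 * (Q * P0) + τ / 2 * e ^ 2 := by
    have hb1 : 0 ≤ σ / 2 * ‖βh‖ ^ 2 := by positivity
    have hb2 : 0 ≤ τ / 2 * r ^ 2 := by positivity
    have hb3 : σ / 2 * ‖β0‖ ^ 2 ≤ σ / 2 * (Q * P0) :=
      mul_le_mul_of_nonneg_left hQle (by linarith)
    linarith
  -- key2
  have hsubmul : mulVecE X (βh - β0) = mulVecE X βh - mulVecE X β0 := by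
    exact congrArg (WithLp.toLp 2) (Matrix.mulVec_sub X βh β0)
  have hεh2 : εh = ε - mulVecE X (βh - β0) := by
    rw [hεh, hb, hsubmul]; abel
  have hinner : ⟪ε, εh⟫ = e ^ 2 - ⟪mulVecE X.transpose ε, βh - β0⟫ := by
    rw [hεh2, inner_sub_right, real_inner_self_eq_norm_sq, inner_mulVecE]
  have hsubp : p (βh - β0) ≤ P + P0 := by
    have h := hp.1 βh (-β0)
    have h2' : p (-β0) = P0 := by simpa using hp.2.1 (-1) β0
    rw [← sub_eq_add_neg, h2'] at h
    exact h
  have hDle : ⟪mulVecE X.transpose ε, βh - β0⟫ ≤ D * (P + P0) :=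
    le_trans (inner_le_dualNorm hp _ _) (mul_le_mul_of_nonneg_left hsubp hDn)
  have hCS : ⟪ε, εh⟫ ≤ e * r := real_inner_le_norm ε εh
  have key2 : e ^ 2 ≤ e * r + D * (P + P0) := by
    rw [hinner] at hCS; linarith
  -- clean product identities
  have henp : e * np = lam * P0 := by rw [hnp]; field_simp
  have helam0 : e * lam0 = D := by rw [hlam0]; field_simp
  have het1 : e * t1 = e + τ / 2 * e ^ 2 + σ * (Q * P0) / 2 := by
    rw [ht1]; field_simp
  have hnpn : 0 ≤ np := by rw [hnp]; positivity
  have ht1n : 0 < t1 := by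
    have a1 : 0 ≤ τ / 2 * e ^ 2 := mul_nonneg (by linarith) (sq_nonneg e)
    have a2 : 0 ≤ σ * (Q * P0) / 2 := by
      have := mul_nonneg hσ (mul_nonneg hQn hP0n)
      linarith
    have hx : 0 < e * t1 := by rw [het1]; linarith
    have := div_pos hx he
    rwa [mul_comm, mul_div_assoc, div_self (ne_of_gt he), mul_one] at this
  have hcun : 0 ≤ cu := by rw [hcu]; linarith
  -- upper bound
  have hupper : r / e ≤ cu := by
    rw [div_le_iff₀ he]
    have hecu : cu * e = e + τ / 2 * e ^ 2 + σ * (Q * P0) / 2 + lam * P0 := by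
      rw [hcu, mul_comm, mul_add, het1, henp]
    nlinarith [mul_nonneg hlam.le hPn]
  -- lower bound
  have hlamP : lam * P ≤ e * t1 + e * np := by
    rw [het1, henp]; linarith
  have bigstep : lam * e ^ 2 ≤ lam * (e * r) + D * (e * t1) + 2 * (D * (e * np)) := by
    nlinarith [mul_le_mul_of_nonneg_left key2 hlam.le, mul_le_mul_of_nonneg_left hlamP hDn,
      henp]
  have smallstep : lam * e ≤ lam * r + D * t1 + 2 * (D * np) := by
    have := mul_le_mul_of_nonneg_left bigstep (le_of_lt (inv_pos.mpr he))
    have he' : e ≠ 0 := ne_of_gt he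
    calc lam * e = e⁻¹ * (lam * e ^ 2) := by field_simp
      _ ≤ e⁻¹ * (lam * (e * r) + D * (e * t1) + 2 * (D * (e * np))) := this
      _ = lam * r + D * t1 + 2 * (D * np) := by field_simp
  have hNle : (1 - lam0 * t1 / lam - 2 * lam0 * np / lam) ≤ r / e := by
    rw [le_div_iff₀ he]
    have hkey : (1 - lam0 * t1 / lam - 2 * lam0 * np / lam) * e * lam
        = lam * e - D * t1 - 2 * (D * np) := by
      rw [← helam0]; field_simp
    have : (1 - lam0 * t1 / lam - 2 * lam0 * np / lam) * e * lam ≤ r * lam := by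
      rw [hkey]; linarith
    exact le_of_mul_le_mul_right this hlam
  have hN'pos : 0 < 1 - a - 2 * lam0 * np / lam := by linarith
  have haN : lam0 * t1 / lam ≤ a := by
    rw [ha]
    have h0 : 0 ≤ σ * Q * cu * t1 / lam := by positivity
    rw [add_mul, add_div]
    linarith
  have hD' : 1 ≤ 2 + (1 + σ * Q / lam) * np := by
    have h0 : 0 ≤ (1 + σ * Q / lam) * np := by positivity
    linarith
  have hcl_le : cl ≤ 1 - a - 2 * lam0 * np / lam := by
    rw [hcl]; exact div_le_self hN'pos.le hD'
  exact ⟨by linarith, hupper⟩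
end
end

section
/- Let p be a norm on ℝⁿ that is weakly decomposable for an index set S ⊆ {1,…,n}, let X ∈ ℝ^{m×n}, ε ∈ ℝ^m, and β, β̂ ∈ ℝⁿ with supp(β) ⊆ S. Then ⟨ε, X(β̂ − β)⟩ ≤ p_*((Xᵀε)_S) · p(β̂_S − β) + (p^{S̄})_*((Xᵀε)^{S̄}) · p^{S̄}(β̂^{S̄}). -/
open scoped RealInnerProductSpace

noncomputable section

section Aux

variable {E : Type*} [AddCommGroup E] [Module ℝ E]

lemma IsNorm.zero' {q : E → ℝ} (hq : IsNorm q) : q 0 = 0 := (hq.2.2 0).mpr rfl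

lemma IsNorm.nonneg'_s9 {q : E → ℝ} (hq : IsNorm q) (x : E) : 0 ≤ q x := by
  have h := hq.1 x (-x)
  have hneg : q (-x) = q x := by simpa using hq.2.1 (-1) x
  have h0 : q 0 ≤ q x + q x := by simpa [hneg] using h
  nlinarith [hq.zero']

variable {ι : Type*} [Fintype ι]

lemma IsNorm.continuous' {q : EuclideanSpace ℝ ι → ℝ} (hq : IsNorm q) : Continuous q := by
  classical
  -- upper bound q x ≤ C ‖x‖
  set C : ℝ := ∑ i : ι, q (EuclideanSpace.single i 1) with hC
  have happle : ∀ (x : EuclideanSpace ℝ ι) (i : ι), |x i| ≤ ‖x‖ := by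
    intro x i
    have := abs_real_inner_le_norm (EuclideanSpace.single i (1:ℝ)) x
    simpa [EuclideanSpace.inner_single_left, EuclideanSpace.norm_single] using this
  have hub : ∀ x : EuclideanSpace ℝ ι, q x ≤ C * ‖x‖ := by
    intro x
    have hx : x = ∑ i : ι, (x i) • EuclideanSpace.single i (1:ℝ) := by
      refine PiLp.ext fun j => ?_
      rw [WithLp.ofLp_sum, Finset.sum_apply]
      simp [EuclideanSpace.single_apply, mul_ite]
    calc q x = q (∑ i : ι, (x i) • EuclideanSpace.single i (1:ℝ)) := by rw [← hx]
      _ ≤ ∑ i : ι, q ((x i) • EuclideanSpace.single i (1:ℝ)) :=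
          Finset.le_sum_of_subadditive q hq.zero'.le hq.1 _ _
      _ = ∑ i : ι, |x i| * q (EuclideanSpace.single i (1:ℝ)) := by
          simp [hq.2.1]
      _ ≤ ∑ i : ι, ‖x‖ * q (EuclideanSpace.single i (1:ℝ)) := by
          refine Finset.sum_le_sum fun i _ => ?_
          exact mul_le_mul_of_nonneg_right (happle x i) (hq.nonneg'_s9 _)
      _ = C * ‖x‖ := by rw [hC, Finset.sum_mul]; ring_nf
  have hlip : ∀ x y : EuclideanSpace ℝ ι, |q x - q y| ≤ C * ‖x - y‖ := by
    intro x y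
    have h1 : q x ≤ q y + q (x - y) := by
      have := hq.1 y (x - y); simpa using this
    have h2 : q y ≤ q x + q (y - x) := by
      have := hq.1 x (y - x); simpa using this
    have hsym : q (y - x) = q (x - y) := by
      have := hq.2.1 (-1) (x - y); simpa [neg_sub] using this
    have := hub (x - y)
    rw [abs_sub_le_iff]
    constructor <;> nlinarith
  rw [Metric.continuous_iff]
  intro x εp hεp
  by_cases hC0 : C ≤ 0
  · refine ⟨1, one_pos, fun y _ => ?_⟩
    have := hlip y x
    have : |q y - q x| ≤ 0 := le_trans this (by nlinarith [norm_nonneg (y - x)])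
    simpa [Real.dist_eq] using lt_of_le_of_lt this hεp
  · push_neg at hC0
    refine ⟨εp / C, by positivity, fun y hy => ?_⟩
    have h := hlip y x
    rw [Real.dist_eq]
    calc |q y - q x| ≤ C * ‖y - x‖ := h
      _ < C * (εp / C) := by
          refine mul_lt_mul_of_pos_left ?_ hC0
          simpa [dist_eq_norm] using hy
      _ = εp := by field_simp

/-- Key Hölder-type bound with the dual norm. -/
lemma inner_le_dualNorm_mul {q : EuclideanSpace ℝ ι → ℝ} (hq : IsNorm q)
    (z x : EuclideanSpace ℝ ι) : ⟪z, x⟫ ≤ dualNorm q z * q x := by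
  classical
  by_cases htriv : ∀ y : EuclideanSpace ℝ ι, y = 0
  · have hset : {r : ℝ | ∃ β : EuclideanSpace ℝ ι, q β ≤ 1 ∧ r = ⟪z, β⟫} = {0} := by
      ext r
      constructor
      · rintro ⟨β, -, rfl⟩; simp [htriv β]
      · rintro rfl
        exact ⟨0, by simp [hq.zero'], by simp⟩
    have : ⟪z, x⟫ = 0 := by rw [htriv x]; simp
    rw [this, dualNorm, hset, csSup_singleton]
    simp [hq.nonneg'_s9 x]
  · push_neg at htriv
    obtain ⟨y₀, hy₀⟩ := htriv
    -- lower bound: ∃ c > 0, ∀ β, c * ‖β‖ ≤ q β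
    have hsphere : (Metric.sphere (0 : EuclideanSpace ℝ ι) 1).Nonempty :=
      ⟨‖y₀‖⁻¹ • y₀, by simp [norm_smul, norm_ne_zero_iff.mpr hy₀,
        inv_mul_cancel₀ (norm_ne_zero_iff.mpr hy₀)]⟩
    obtain ⟨x₀, hx₀mem, hx₀min⟩ :=
      (isCompact_sphere (0 : EuclideanSpace ℝ ι) 1).exists_isMinOn hsphere
        (hq.continuous'.continuousOn)
    have hx₀norm : ‖x₀‖ = 1 := by simpa using hx₀mem
    set c : ℝ := q x₀ with hc
    have hcpos : 0 < c := by
      rcases (hq.nonneg'_s9 x₀).lt_or_eq with h | h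
      · exact h
      · exfalso
        have : x₀ = 0 := (hq.2.2 x₀).mp h.symm
        rw [this] at hx₀norm; simp at hx₀norm
    have hlow : ∀ β : EuclideanSpace ℝ ι, c * ‖β‖ ≤ q β := by
      intro β
      by_cases hβ : β = 0
      · simp [hβ, hq.zero']
      · have hβn : ‖β‖ ≠ 0 := norm_ne_zero_iff.mpr hβ
        have hmem : ‖β‖⁻¹ • β ∈ Metric.sphere (0 : EuclideanSpace ℝ ι) 1 := by
          simp [norm_smul, inv_mul_cancel₀ hβn]
        have hmin : q x₀ ≤ q (‖β‖⁻¹ • β) := hx₀min hmem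
        have hq' : q (‖β‖⁻¹ • β) = ‖β‖⁻¹ * q β := by
          rw [hq.2.1]; congr 1; rw [abs_of_nonneg (by positivity)]
        rw [hq'] at hmin
        have hβpos : 0 < ‖β‖ := lt_of_le_of_ne (norm_nonneg β) (Ne.symm hβn)
        calc c * ‖β‖ ≤ (‖β‖⁻¹ * q β) * ‖β‖ :=
              mul_le_mul_of_nonneg_right hmin (norm_nonneg β)
          _ = q β := by field_simp
    have hbdd : BddAbove {r : ℝ | ∃ β : EuclideanSpace ℝ ι, q β ≤ 1 ∧ r = ⟪z, β⟫} := by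
      refine ⟨‖z‖ * c⁻¹, ?_⟩
      rintro r ⟨β, hβ, rfl⟩
      have h1 : ‖β‖ ≤ c⁻¹ := by
        have h2 : c * ‖β‖ ≤ 1 := (hlow β).trans hβ
        have h3 := mul_le_mul_of_nonneg_left h2 (inv_pos.mpr hcpos).le
        rw [mul_one, ← mul_assoc, inv_mul_cancel₀ hcpos.ne', one_mul] at h3
        exact h3
      calc ⟪z, β⟫ ≤ ‖z‖ * ‖β‖ := real_inner_le_norm z β
        _ ≤ ‖z‖ * c⁻¹ := mul_le_mul_of_nonneg_left h1 (norm_nonneg z)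
    by_cases hx : x = 0
    · have hlhs : ⟪z, x⟫ = 0 := by simp [hx]
      have hdn : 0 ≤ dualNorm q z :=
        le_csSup hbdd ⟨0, by simp [hq.zero'], by simp⟩
      rw [hlhs, hx, hq.zero', mul_zero]
    · have hqx : 0 < q x :=
        lt_of_le_of_ne (hq.nonneg'_s9 x) (fun h => hx ((hq.2.2 x).mp h.symm))
      set β := (q x)⁻¹ • x with hβdef
      have hqβ : q β = 1 := by
        rw [hβdef, hq.2.1, abs_of_nonneg (by positivity), inv_mul_cancel₀ (ne_of_gt hqx)]
      have hmem : ⟪z, β⟫ ∈ {r : ℝ | ∃ β : EuclideanSpace ℝ ι, q β ≤ 1 ∧ r = ⟪z, β⟫} :=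
        ⟨β, hqβ.le, rfl⟩
      have hle : ⟪z, β⟫ ≤ dualNorm q z := le_csSup hbdd hmem
      have : ⟪z, x⟫ = q x * ⟪z, β⟫ := by
        rw [hβdef, real_inner_smul_right]
        field_simp
      rw [this, mul_comm (dualNorm q z) (q x)]
      exact mul_le_mul_of_nonneg_left hle hqx.le

end Aux

/-- generalized Hölder bound
`⟨ε, X(β̂ − β)⟩ ≤ p_*((Xᵀε)_S)·p(β̂_S − β) + (p^{S̄})_*((Xᵀε)^{S̄})·p^{S̄}(β̂^{S̄})`. -/
theorem inner_decomposition_bound {m n : ℕ} (S : Finset (Fin n))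
    (p : EuclideanSpace ℝ (Fin n) → ℝ)
    (psc : EuclideanSpace ℝ {i : Fin n // i ∉ S} → ℝ)
    (hp : IsNorm p) (hpsc : IsNorm psc)
    (hdec : ∀ β : EuclideanSpace ℝ (Fin n), p (projS S β) + psc (restrC S β) ≤ p β)
    (X : Matrix (Fin m) (Fin n) ℝ) (ε : EuclideanSpace ℝ (Fin m))
    (β βh : EuclideanSpace ℝ (Fin n))
    (hsupp : ∀ i, β i ≠ 0 → i ∈ S) :
    ⟪ε, mulVecE X (βh - β)⟫ ≤
      dualNorm p (projS S (mulVecE X.transpose ε)) * p (projS S βh - β) +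
        dualNorm psc (restrC S (mulVecE X.transpose ε)) * psc (restrC S βh) := by
  classical
  set z := mulVecE X.transpose ε with hz
  set v : EuclideanSpace ℝ (Fin n) := βh - β with hv
  have hβzero : ∀ i, i ∉ S → β i = 0 := by
    intro i hi; by_contra h; exact hi (hsupp i h)
  have hinner : ⟪ε, mulVecE X v⟫ = ∑ i : Fin n, z i * v i := by
    simp only [mulVecE, PiLp.inner_apply, RCLike.inner_apply, conj_trivial, hz]
    have h1 : (∑ j : Fin m, X.mulVec v j * ε j) = dotProduct (X.mulVec v) ε := rfl
    rw [h1, dotProduct_comm, Matrix.dotProduct_mulVec]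
    simp [Matrix.mulVec_transpose, dotProduct, mulVecE]
  have hsplit : (∑ i : Fin n, z i * v i)
      = (∑ i ∈ S, z i * v i) + ∑ i ∈ Sᶜ, z i * v i :=
    (Finset.sum_add_sum_compl S _).symm
  have h1 : ⟪projS S z, projS S βh - β⟫ = ∑ i ∈ S, z i * v i := by
    simp only [PiLp.inner_apply, RCLike.inner_apply, conj_trivial]
    rw [← Finset.sum_add_sum_compl S]
    simp only [mul_comm ((projS S βh - β) _) _]
    have ha : ∀ i ∈ S, (projS S z) i * ((projS S βh - β) i) = z i * v i := by
      intro i hi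
      have : (projS S βh - β) i = projS S βh i - β i := rfl
      rw [this]
      simp [projS, hi, hv]
    have hb : ∀ i ∈ Sᶜ, (projS S z) i * ((projS S βh - β) i) = 0 := by
      intro i hi
      simp [projS, Finset.mem_compl.mp hi]
    rw [Finset.sum_congr rfl ha, Finset.sum_eq_zero hb, add_zero]
  have h2 : ⟪restrC S z, restrC S βh⟫ = ∑ i ∈ Sᶜ, z i * v i := by
    simp only [PiLp.inner_apply, RCLike.inner_apply, conj_trivial, restrC]
    rw [Finset.sum_subtype Sᶜ (fun i => Finset.mem_compl) (fun i => z i * v i)]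
    apply Finset.sum_congr rfl
    intro j _
    have hb : β j.1 = 0 := hβzero j.1 j.2
    have : v j.1 = βh j.1 - β j.1 := rfl
    rw [this, hb, sub_zero]
    exact mul_comm _ _
  calc ⟪ε, mulVecE X v⟫ = ⟪projS S z, projS S βh - β⟫ + ⟪restrC S z, restrC S βh⟫ := by
        rw [hinner, hsplit, h1, h2]
    _ ≤ dualNorm p (projS S z) * p (projS S βh - β) +
          dualNorm psc (restrC S z) * psc (restrC S βh) :=
        add_le_add (inner_le_dualNorm_mul hp _ _) (inner_le_dualNorm_mul hpsc _ _)
end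
end
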